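/- For a finite point set P with distinct x- and y-coordinates, Funnel(P) ≥ 2·zRects(P). More specifically, for each p ∈ P, if P contains k z-rectangles whose top point is p, then f(P,p) ≥ 2k. -/

import Mathlib

/-- Number of maximal blocks of equal symbols in a string over `{L,R}` (as `Bool`s). -/
def blocks : List Bool → ℕ
  | [] => 0
  | [_] => 1
  | a :: b :: l => (if a = b then 0 else 1) + blocks (b :: l)

/-- The labeled merge of two finite sets of reals: sort `L ∪ R` increasingly and
label each element by whether it came from `L` (`true`) or not. -/
noncomputable def mix (L R : Finset ℝ) : List Bool :=
  ((L ∪ R).sort (· ≤ ·)).map (fun x => decide (x ∈ L))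

/-- `mixValue L R` is the number of maximal same-origin blocks in the merged sorted sequence. -/
noncomputable def mixValue (L R : Finset ℝ) : ℕ := blocks (mix L R)
/-- Membership in the minimal axis-aligned rectangle spanned by `p` and `q`. -/
def inRect (p q t : ℝ × ℝ) : Prop :=
  min p.1 q.1 ≤ t.1 ∧ t.1 ≤ max p.1 q.1 ∧ min p.2 q.2 ≤ t.2 ∧ t.2 ≤ max p.2 q.2

noncomputable instance (p q t : ℝ × ℝ) : Decidable (inRect p q t) := by
  unfold inRect; infer_instance

/-- The left funnel of `p` within `P`. -/
noncomputable def FL (P : Finset (ℝ × ℝ)) (p : ℝ × ℝ) : Finset (ℝ × ℝ) :=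
  P.filter (fun q => q.2 < p.2 ∧ q.1 < p.1 ∧ ∀ t ∈ P, inRect p q t → t = p ∨ t = q)

/-- The right funnel of `p` within `P`. -/
noncomputable def FR (P : Finset (ℝ × ℝ)) (p : ℝ × ℝ) : Finset (ℝ × ℝ) :=
  P.filter (fun q => q.2 < p.2 ∧ q.1 > p.1 ∧ ∀ t ∈ P, inRect p q t → t = p ∨ t = q)

/-- The funnel contribution `f(P,p)`. -/
noncomputable def fContrib (P : Finset (ℝ × ℝ)) (p : ℝ × ℝ) : ℕ :=
  mixValue ((FL P p).image Prod.snd) ((FR P p).image Prod.snd)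

/-- Wilber's Funnel bound. -/
noncomputable def Funnel (P : Finset (ℝ × ℝ)) : ℕ := ∑ p ∈ P, fContrib P p

/-- All points of `P` have distinct `y`-coordinates. -/
def DistinctY (P : Finset (ℝ × ℝ)) : Prop :=
  ∀ p ∈ P, ∀ q ∈ P, p.2 = q.2 → p = q

/-- All points of `P` have distinct `x`-coordinates. -/
def DistinctX (P : Finset (ℝ × ℝ)) : Prop :=
  ∀ p ∈ P, ∀ q ∈ P, p.1 = q.1 → p = q
/-- `(p,q,r,s)` is a z-rectangle of `P`. -/
def IsZRect (P : Finset (ℝ × ℝ)) (p q r s : ℝ × ℝ) : Prop :=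
  p ∈ P ∧ q ∈ P ∧ r ∈ P ∧ s ∈ P ∧
  q.1 < p.1 ∧ p.1 < r.1 ∧ r.1 < s.1 ∧
  r.2 < q.2 ∧ q.2 < s.2 ∧ s.2 < p.2 ∧
  ∀ t ∈ P, q.1 ≤ t.1 → t.1 ≤ s.1 → r.2 ≤ t.2 → t.2 ≤ p.2 →
    (t = p ∨ t = q ∨ t = r ∨ t = s)

noncomputable instance (P : Finset (ℝ × ℝ)) (p q r s : ℝ × ℝ) : Decidable (IsZRect P p q r s) := by
  unfold IsZRect; infer_instance

/-- The number of z-rectangles of `P`. -/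
noncomputable def zRects (P : Finset (ℝ × ℝ)) : ℕ :=
  ((P ×ˢ P ×ˢ P ×ˢ P).filter
    (fun t => IsZRect P t.1 t.2.1 t.2.2.1 t.2.2.2)).card

/-- The number of z-rectangles of `P` whose top point is `p`. -/
noncomputable def zRectsTop (P : Finset (ℝ × ℝ)) (p : ℝ × ℝ) : ℕ :=
  ((P ×ˢ P ×ˢ P).filter (fun t => IsZRect P p t.1 t.2.1 t.2.2)).card


lemma blocks_le_cons (a : Bool) (l : List Bool) : blocks l ≤ blocks (a :: l) := by
  cases l with
  | nil => simp [blocks]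
  | cons b t => simp only [blocks]; omega

lemma blocks_cons_le (a b : Bool) (l : List Bool) :
    blocks (a :: l) ≤ blocks (a :: b :: l) := by
  cases l with
  | nil => simp only [blocks]; split <;> omega
  | cons c t =>
    simp only [blocks]
    cases a <;> cases b <;> cases c <;> simp only [blocks] <;> simp <;> omega

lemma blocks_sublist_aux : ∀ {l₁ l₂ : List Bool}, l₁.Sublist l₂ →
    blocks l₁ ≤ blocks l₂ ∧ ∀ a, blocks (a :: l₁) ≤ blocks (a :: l₂) := by
  intro l₁ l₂ h
  induction h with
  | slnil => simp
  | @cons l₁ l₂ b h ih =>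
    refine ⟨ih.1.trans (blocks_le_cons b _), fun a => (ih.2 a).trans (blocks_cons_le a b _)⟩
  | @cons_cons l₁ l₂ a h ih =>
    refine ⟨ih.2 a, fun b => ?_⟩
    cases l₁ with
    | nil =>
      have := ih.2 a
      calc blocks [b, a] = (if b = a then 0 else 1) + blocks [a] := rfl
        _ ≤ (if b = a then 0 else 1) + blocks (a :: l₂) := by
            have : blocks [a] ≤ blocks (a :: l₂) := ih.2 a
            omega
        _ = blocks (b :: a :: l₂) := by cases l₂ <;> rfl
    | cons c t =>
      have h1 : blocks (b :: a :: c :: t) = (if b = a then 0 else 1) + blocks (a :: c :: t) := rfl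
      have h2 : blocks (b :: a :: l₂) = (if b = a then 0 else 1) + blocks (a :: l₂) := by
        cases l₂ <;> rfl
      have := ih.2 a
      omega

lemma blocks_sublist {l₁ l₂ : List Bool} (h : l₁.Sublist l₂) : blocks l₁ ≤ blocks l₂ :=
  (blocks_sublist_aux h).1

def pat : ℕ → List Bool
  | 0 => []
  | n + 1 => true :: false :: pat n

lemma blocks_false_pat (n : ℕ) : blocks (false :: pat n) = 2 * n + 1 := by
  induction n with
  | zero => rfl
  | succ m ih =>
    have : blocks (false :: pat (m+1)) = 1 + (1 + blocks (false :: pat m)) := by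
      simp only [pat, blocks]
      cases hm : pat m <;> simp [blocks]
    omega

lemma exists_chain (L R : Finset ℝ) (hd : Disjoint L R) (Q : Finset ℝ) (hQL : Q ⊆ L)
    (hup : ∀ y ∈ Q, ∃ b ∈ R, y < b)
    (hmid : ∀ y₁ ∈ Q, ∀ y₂ ∈ Q, y₁ < y₂ → ∃ c ∈ R, y₁ < c ∧ c < y₂) :
    ∀ ws : List ℝ, ws.Chain' (· < ·) → (∀ y ∈ ws, y ∈ Q) →
    ∃ vs : List ℝ, vs.Chain' (· < ·) ∧ (∀ v ∈ vs, v ∈ L ∪ R) ∧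
      vs.map (fun x => decide (x ∈ L)) = pat ws.length ∧ vs.head? = ws.head? := by
  intro ws
  induction ws with
  | nil => intro _ _; exact ⟨[], List.IsChain.nil, by simp [pat]⟩
  | cons y tl ih =>
    intro hch hmem
    have hyQ : y ∈ Q := hmem y (by simp)
    have hyL : y ∈ L := hQL hyQ
    cases tl with
    | nil =>
      obtain ⟨b, hbR, hyb⟩ := hup y hyQ
      have hbL : b ∉ L := fun h => (Finset.disjoint_left.mp hd h) hbR
      refine ⟨[y, b], ?_, ?_, ?_, rfl⟩
      · exact List.isChain_cons_cons.mpr ⟨hyb, List.IsChain.singleton _⟩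
      · intro v hv; simp at hv; rcases hv with rfl | rfl
        · exact Finset.mem_union_left _ hyL
        · exact Finset.mem_union_right _ hbR
      · simp [pat, hyL, hbL]
    | cons y' tl' =>
      have hch' : (y' :: tl').Chain' (· < ·) := hch.tail
      have hmem' : ∀ w ∈ y' :: tl', w ∈ Q := fun w hw => hmem w (by simp [hw])
      obtain ⟨vs', hvch, hvmem, hvmap, hvhead⟩ := ih hch' hmem'
      have hyy' : y < y' := (List.isChain_cons_cons.mp hch).1
      obtain ⟨c, hcR, hyc, hcy'⟩ := hmid y hyQ y' (hmem' y' (by simp)) hyy'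
      have hcL : c ∉ L := fun h => (Finset.disjoint_left.mp hd h) hcR
      refine ⟨y :: c :: vs', ?_, ?_, ?_, rfl⟩
      · refine List.isChain_cons_cons.mpr ⟨hyc, ?_⟩
        exact hvch.cons (by intro w hw; rw [hvhead] at hw; simp at hw; subst hw; exact hcy')
      · intro v hv; simp at hv
        rcases hv with rfl | rfl | hv
        · exact Finset.mem_union_left _ hyL
        · exact Finset.mem_union_right _ hcR
        · exact hvmem v hv
      · simp only [List.map_cons, hvmap, List.length_cons, pat, hyL, hcL]
        simp [pat]

lemma mixValue_ge (L R : Finset ℝ) (hd : Disjoint L R) (Q : Finset ℝ) (hQL : Q ⊆ L)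
    (hlow : ∀ y ∈ Q, ∃ a ∈ R, a < y)
    (hup : ∀ y ∈ Q, ∃ b ∈ R, y < b)
    (hmid : ∀ y₁ ∈ Q, ∀ y₂ ∈ Q, y₁ < y₂ → ∃ c ∈ R, y₁ < c ∧ c < y₂) :
    2 * Q.card ≤ mixValue L R := by
  rcases Q.eq_empty_or_nonempty with rfl | hne
  · simp
  · set ws := Q.sort (· ≤ ·) with hws
    have hsorted : ws.SortedLT := Finset.sortedLT_sort Q
    have hwmem : ∀ y ∈ ws, y ∈ Q := fun y hy => (Finset.mem_sort _).mp hy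
    have hlen : ws.length = Q.card := Finset.length_sort _
    have hwne : ws ≠ [] := by
      intro hwe
      rw [hwe] at hlen
      simp at hlen
      exact absurd hlen.symm hne.card_pos.ne'
    obtain ⟨y, rest, hcons⟩ := List.exists_cons_of_ne_nil hwne
    obtain ⟨vs, hvch, hvmem, hvmap, hvhead⟩ :=
      exists_chain L R hd Q hQL hup hmid ws hsorted.isChain hwmem
    rw [hcons] at hvhead
    have hyQ : y ∈ Q := hwmem y (hcons ▸ by simp)
    obtain ⟨a, haR, hay⟩ := hlow y hyQ
    have haL : a ∉ L := fun h => (Finset.disjoint_left.mp hd h) haR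
    set vs0 := a :: vs with hvs0
    have hch0 : vs0.Chain' (· < ·) :=
      hvch.cons (by intro w hw; rw [hvhead] at hw; simp at hw; subst hw; exact hay)
    have hmap0 : vs0.map (fun x => decide (x ∈ L)) = false :: pat ws.length := by
      simp [hvs0, hvmap, haL]
    -- vs0 is a sublist of the sorted union
    have hnodup : vs0.Nodup := hch0.pairwise.nodup
    have hsub : vs0 ⊆ (L ∪ R).sort (· ≤ ·) := by
      intro v hv
      rw [Finset.mem_sort]
      simp only [hvs0, List.mem_cons] at hv
      rcases hv with rfl | hv
      · exact Finset.mem_union_right _ haR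
      · exact hvmem v hv
    have hsl : vs0.Sublist ((L ∪ R).sort (· ≤ ·)) :=
      List.sublist_of_subperm_of_pairwise (hnodup.subperm hsub)
        (hch0.pairwise.imp le_of_lt) (Finset.pairwise_sort _ _)
    have hb : blocks (vs0.map (fun x => decide (x ∈ L))) ≤ mixValue L R :=
      blocks_sublist (hsl.map _)
    rw [hmap0, blocks_false_pat, hlen] at hb
    omega

section GeoAux

variable {P : Finset (ℝ × ℝ)} {p q r s : ℝ × ℝ}

lemma zr_q_mem_FL (h : IsZRect P p q r s) : q ∈ FL P p := by
  obtain ⟨hp, hq, hr, hs, h1, h2, h3, h4, h5, h6, hbig⟩ := h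
  rw [FL, Finset.mem_filter]
  refine ⟨hq, by linarith, h1, fun t ht hin => ?_⟩
  obtain ⟨ha, hb, hc, hd⟩ := hin
  have ht1 : q.1 ≤ t.1 := le_trans (le_min (by linarith) le_rfl) ha
  have ht2 : t.1 ≤ p.1 := hb.trans (max_le le_rfl (by linarith))
  have ht3 : q.2 ≤ t.2 := le_trans (le_min (by linarith) le_rfl) hc
  have ht4 : t.2 ≤ p.2 := hd.trans (max_le le_rfl (by linarith))
  rcases hbig t ht ht1 (by linarith) (by linarith) ht4 with he | he | he | he
  · exact Or.inl he
  · exact Or.inr he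
  · exfalso
    have : t.2 = r.2 := by rw [he]
    linarith
  · exfalso
    have : t.1 = s.1 := by rw [he]
    linarith

lemma zr_r_mem_FR (h : IsZRect P p q r s) : r ∈ FR P p := by
  obtain ⟨hp, hq, hr, hs, h1, h2, h3, h4, h5, h6, hbig⟩ := h
  rw [FR, Finset.mem_filter]
  refine ⟨hr, by linarith, h2, fun t ht hin => ?_⟩
  obtain ⟨ha, hb, hc, hd⟩ := hin
  have ht1 : p.1 ≤ t.1 := le_trans (le_min le_rfl (by linarith)) ha
  have ht2 : t.1 ≤ r.1 := hb.trans (max_le (by linarith) le_rfl)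
  have ht3 : r.2 ≤ t.2 := le_trans (le_min (by linarith) le_rfl) hc
  have ht4 : t.2 ≤ p.2 := hd.trans (max_le le_rfl (by linarith))
  rcases hbig t ht (by linarith) (by linarith) ht3 ht4 with he | he | he | he
  · exact Or.inl he
  · exfalso
    have : t.1 = q.1 := by rw [he]
    linarith
  · exact Or.inr he
  · exfalso
    have : t.1 = s.1 := by rw [he]
    linarith

lemma zr_s_mem_FR (h : IsZRect P p q r s) : s ∈ FR P p := by
  obtain ⟨hp, hq, hr, hs, h1, h2, h3, h4, h5, h6, hbig⟩ := h
  rw [FR, Finset.mem_filter]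
  refine ⟨hs, by linarith, by linarith, fun t ht hin => ?_⟩
  obtain ⟨ha, hb, hc, hd⟩ := hin
  have ht1 : p.1 ≤ t.1 := le_trans (le_min le_rfl (by linarith)) ha
  have ht2 : t.1 ≤ s.1 := hb.trans (max_le (by linarith) le_rfl)
  have ht3 : s.2 ≤ t.2 := le_trans (le_min (by linarith) le_rfl) hc
  have ht4 : t.2 ≤ p.2 := hd.trans (max_le le_rfl (by linarith))
  rcases hbig t ht (by linarith) ht2 (by linarith) ht4 with he | he | he | he
  · exact Or.inl he
  · exfalso
    have : t.1 = q.1 := by rw [he]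
    linarith
  · exfalso
    have : t.2 = r.2 := by rw [he]
    linarith
  · exact Or.inr he

lemma zr_unique {r' s' : ℝ × ℝ} (hX : DistinctX P) (hY : DistinctY P)
    (h : IsZRect P p q r s) (h' : IsZRect P p q r' s') : r = r' ∧ s = s' := by
  obtain ⟨hp, hq, hr, hs, h1, h2, h3, h4, h5, h6, hbig⟩ := h
  obtain ⟨_, _, hr', hs', h1', h2', h3', h4', h5', h6', hbig'⟩ := h'
  have hss : s = s' := by
    rcases lt_trichotomy s.1 s'.1 with hlt | heq | hgt
    · rcases hbig' s hs (by linarith) (by linarith) (by linarith) (by linarith)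
        with he | he | he | he
      · exfalso
        have : s.2 = p.2 := by rw [he]
        linarith
      · exfalso
        have : s.1 = q.1 := by rw [he]
        linarith
      · exfalso
        have : s.2 = r'.2 := by rw [he]
        linarith
      · exact he
    · exact hX s hs s' hs' heq
    · rcases hbig s' hs' (by linarith) (by linarith) (by linarith) (by linarith)
        with he | he | he | he
      · exfalso
        have : s'.2 = p.2 := by rw [he]
        linarith
      · exfalso
        have : s'.1 = q.1 := by rw [he]
        linarith
      · exfalso
        have : s'.2 = r.2 := by rw [he]
        linarith
      · exact he.symm
  subst hss
  refine ⟨?_, rfl⟩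
  rcases lt_trichotomy r.2 r'.2 with hlt | heq | hgt
  · rcases hbig r' hr' (by linarith) (by linarith) (by linarith) (by linarith)
      with he | he | he | he
    · exfalso
      have : r'.2 = p.2 := by rw [he]
      linarith
    · exfalso
      have : r'.1 = q.1 := by rw [he]
      linarith
    · exact he.symm
    · exfalso
      have : r'.2 = s.2 := by rw [he]
      linarith
  · exact hY r hr r' hr' heq
  · rcases hbig' r hr (by linarith) (by linarith) (by linarith) (by linarith)
      with he | he | he | he
    · exfalso
      have : r.2 = p.2 := by rw [he]
      linarith
    · exfalso
      have : r.1 = q.1 := by rw [he]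
      linarith
    · exact he
    · exfalso
      have : r.2 = s.2 := by rw [he]
      linarith

lemma zr_between {q1 r1 s1 q2 r2 s2 : ℝ × ℝ} (hX : DistinctX P)
    (h1 : IsZRect P p q1 r1 s1) (h2 : IsZRect P p q2 r2 s2) (hy : q1.2 < q2.2) :
    q1.2 < r2.2 := by
  by_contra hcon
  push_neg at hcon
  obtain ⟨hp, hq1, hr1, hs1, a1, a2, a3, a4, a5, a6, hbig1⟩ := h1
  obtain ⟨_, hq2, hr2, hs2, b1, b2, b3, b4, b5, b6, hbig2⟩ := h2
  rcases lt_trichotomy q1.1 q2.1 with hlt | heq | hgt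
  · rcases hbig1 q2 hq2 (le_of_lt hlt) (by linarith) (by linarith) (by linarith)
      with he | he | he | he
    · have : q2.2 = p.2 := by rw [he]
      linarith
    · have : q2.2 = q1.2 := by rw [he]
      linarith
    · have : q2.2 = r1.2 := by rw [he]
      linarith
    · have : q2.1 = s1.1 := by rw [he]
      linarith
  · have := hX q1 hq1 q2 hq2 heq
    rw [this] at hy
    exact lt_irrefl _ hy
  · rcases hbig2 q1 hq1 (le_of_lt hgt) (by linarith) hcon (by linarith)
      with he | he | he | he
    · have : q1.2 = p.2 := by rw [he]
      linarith
    · have : q1.2 = q2.2 := by rw [he]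
      linarith
    · have : q1.1 = r2.1 := by rw [he]
      linarith
    · have : q1.1 = s2.1 := by rw [he]
      linarith

end GeoAux

theorem funnel_ge_two_zRects (P : Finset (ℝ × ℝ))
    (hX : DistinctX P) (hY : DistinctY P) :
    Funnel P ≥ 2 * zRects P ∧ ∀ p ∈ P, fContrib P p ≥ 2 * zRectsTop P p := by
  have key : ∀ p ∈ P, 2 * zRectsTop P p ≤ fContrib P p := by
    intro p hp
    set S := (P ×ˢ P ×ˢ P).filter (fun t => IsZRect P p t.1 t.2.1 t.2.2) with hS
    set L := (FL P p).image Prod.snd with hL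
    set R := (FR P p).image Prod.snd with hR
    have hdisj : Disjoint L R := by
      rw [Finset.disjoint_left]
      intro y hyL hyR
      obtain ⟨a, haF, hay⟩ := Finset.mem_image.mp hyL
      obtain ⟨b, hbF, hby⟩ := Finset.mem_image.mp hyR
      have haP : a ∈ P := (Finset.mem_filter.mp haF).1
      have hbP : b ∈ P := (Finset.mem_filter.mp hbF).1
      have hab : a = b := hY a haP b hbP (by rw [hay, hby])
      have h1 : a.1 < p.1 := (Finset.mem_filter.mp haF).2.2.1
      have h2 : b.1 > p.1 := (Finset.mem_filter.mp hbF).2.2.1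
      rw [hab] at h1
      linarith
    set Qy := S.image (fun t => t.1.2) with hQy
    have hinj : Set.InjOn (fun t : (ℝ × ℝ) × (ℝ × ℝ) × (ℝ × ℝ) => t.1.2) S := by
      intro t ht t' ht' hyy
      simp only [hS, Finset.coe_filter, Set.mem_setOf_eq] at ht ht'
      have hq : t.1 ∈ P := ht.2.2.1
      have hq' : t'.1 ∈ P := ht'.2.2.1
      have h1 : t.1 = t'.1 := hY _ hq _ hq' hyy
      have h2 := zr_unique hX hY (h1 ▸ ht.2) ht'.2
      exact Prod.ext h1 (Prod.ext h2.1 h2.2)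
    have hQL : Qy ⊆ L := by
      intro y hy
      obtain ⟨t, htS, hty⟩ := Finset.mem_image.mp hy
      have hz : IsZRect P p t.1 t.2.1 t.2.2 := (Finset.mem_filter.mp htS).2
      exact Finset.mem_image.mpr ⟨t.1, zr_q_mem_FL hz, hty⟩
    have hlow : ∀ y ∈ Qy, ∃ a ∈ R, a < y := by
      intro y hy
      obtain ⟨t, htS, hty⟩ := Finset.mem_image.mp hy
      have hz : IsZRect P p t.1 t.2.1 t.2.2 := (Finset.mem_filter.mp htS).2
      refine ⟨t.2.1.2, Finset.mem_image.mpr ⟨t.2.1, zr_r_mem_FR hz, rfl⟩, ?_⟩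
      obtain ⟨_, _, _, _, _, _, _, h8, _, _, _⟩ := hz
      rw [← hty]
      exact h8
    have hup : ∀ y ∈ Qy, ∃ b ∈ R, y < b := by
      intro y hy
      obtain ⟨t, htS, hty⟩ := Finset.mem_image.mp hy
      have hz : IsZRect P p t.1 t.2.1 t.2.2 := (Finset.mem_filter.mp htS).2
      refine ⟨t.2.2.2, Finset.mem_image.mpr ⟨t.2.2, zr_s_mem_FR hz, rfl⟩, ?_⟩
      obtain ⟨_, _, _, _, _, _, _, _, h9, _, _⟩ := hz
      rw [← hty]
      exact h9
    have hmid : ∀ y1 ∈ Qy, ∀ y2 ∈ Qy, y1 < y2 → ∃ c ∈ R, y1 < c ∧ c < y2 := by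
      intro y1 hy1 y2 hy2 hlt
      obtain ⟨t1, ht1, hty1⟩ := Finset.mem_image.mp hy1
      obtain ⟨t2, ht2, hty2⟩ := Finset.mem_image.mp hy2
      have hz1 : IsZRect P p t1.1 t1.2.1 t1.2.2 := (Finset.mem_filter.mp ht1).2
      have hz2 : IsZRect P p t2.1 t2.2.1 t2.2.2 := (Finset.mem_filter.mp ht2).2
      subst hty1 hty2
      refine ⟨t2.2.1.2, Finset.mem_image.mpr ⟨t2.2.1, zr_r_mem_FR hz2, rfl⟩,
        zr_between hX hz1 hz2 hlt, ?_⟩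
      obtain ⟨_, _, _, _, _, _, _, h8, _, _, _⟩ := hz2
      exact h8
    have hcard : Qy.card = S.card := Finset.card_image_of_injOn hinj
    have hmain := mixValue_ge L R hdisj Qy hQL hlow hup hmid
    rw [hcard] at hmain
    have e1 : zRectsTop P p = S.card := by
      rw [zRectsTop, hS]
    have e2 : fContrib P p = mixValue L R := by
      rw [fContrib, hL, hR]
    rw [e1, e2]
    exact hmain
  have hsum : zRects P = ∑ p ∈ P, zRectsTop P p := by
    rw [zRects, Finset.card_eq_sum_card_fiberwise
      (f := fun t : (ℝ × ℝ) × (ℝ × ℝ) × (ℝ × ℝ) × (ℝ × ℝ) => t.1) (t := P)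
      (fun x hx => ((Finset.mem_filter.mp hx).2).1)]
    refine Finset.sum_congr rfl fun p hp => ?_
    rw [zRectsTop]
    refine Finset.card_bij' (fun t _ => t.2) (fun u _ => (p, u)) ?_ ?_ ?_ ?_
    · intro a ha
      simp only [Finset.mem_filter, Finset.mem_product] at ha ⊢
      obtain ⟨⟨⟨hm1, hm2⟩, hz⟩, hfst⟩ := ha
      subst hfst
      exact ⟨hm2, hz⟩
    · intro u hu
      simp only [Finset.mem_filter, Finset.mem_product] at hu ⊢
      obtain ⟨hm, hz⟩ := hu
      exact ⟨⟨⟨hz.1, hm⟩, hz⟩, trivial⟩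
    · intro a ha
      simp only [Finset.mem_filter] at ha
      exact Prod.ext ha.2.symm rfl
    · intro u hu
      rfl
  constructor
  · rw [ge_iff_le]
    calc 2 * zRects P = ∑ p ∈ P, 2 * zRectsTop P p := by rw [hsum, Finset.mul_sum]
      _ ≤ ∑ p ∈ P, fContrib P p := Finset.sum_le_sum key
      _ = Funnel P := rfl
  · exact key
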